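/- Let N(k,ω) = α₂(ρ₁/ρ₂)cos(α₁H₁)sin(α₂H₂) + α₁ sin(α₁H₁)cos(α₂H₂) with α_j = sqrt(ω²/c_j² − k²), all parameters positive. For fixed real ω > 0, the set of real k ≥ 0 with N(k,ω) = 0 is finite. -/

import Mathlib

open Complex

open scoped Nat


noncomputable def cosCoeff (H : ℝ) : ℕ → ℂ := fun n => (-1) ^ n * (H : ℂ) ^ (2 * n) / (2 * n)!
noncomputable def sinCoeff (H : ℝ) : ℕ → ℂ := fun n => (-1) ^ n * (H : ℂ) ^ (2 * n + 1) / (2 * n + 1)!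

lemma radius_top_of_le (c : ℕ → ℂ) (A : ℝ) (h : ∀ n, ‖c n‖ ≤ A ^ n / n !) :
    (FormalMultilinearSeries.ofScalars ℂ c).radius = ⊤ := by
  apply FormalMultilinearSeries.radius_eq_top_of_summable_norm
  intro r
  refine Summable.of_nonneg_of_le (fun n => by positivity) (fun n => ?_)
    (Real.summable_pow_div_factorial (A * r))
  rw [FormalMultilinearSeries.ofScalars_norm]
  calc ‖c n‖ * (r:ℝ) ^ n ≤ (A ^ n / n !) * r ^ n := by
        exact mul_le_mul_of_nonneg_right (h n) (by positivity)
    _ = (A * r) ^ n / n ! := by rw [mul_pow]; ring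

lemma norm_cosCoeff (H : ℝ) (n : ℕ) : ‖cosCoeff H n‖ ≤ (H ^ 2) ^ n / n ! := by
  have h2 : (n ! : ℝ) ≤ (2 * n)! := by
    exact_mod_cast Nat.factorial_le (by omega)
  have : ‖cosCoeff H n‖ = |H| ^ (2 * n) / (2 * n)! := by
    simp [cosCoeff, Nat.abs_cast, Complex.norm_natCast]
  rw [this, pow_mul, _root_.sq_abs]
  gcongr

lemma norm_sinCoeff (H : ℝ) (hH : 0 < H) (n : ℕ) :
    ‖sinCoeff H n‖ ≤ H * (H ^ 2) ^ n / n ! := by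
  have h2 : (n ! : ℝ) ≤ (2 * n + 1)! := by
    exact_mod_cast Nat.factorial_le (by omega)
  have : ‖sinCoeff H n‖ = |H| ^ (2 * n + 1) / (2 * n + 1)! := by
    simp [sinCoeff, Complex.norm_natCast]
  rw [this, pow_succ, pow_mul, _root_.sq_abs, abs_of_pos hH]
  rw [div_le_div_iff₀ (by positivity) (by positivity)]
  calc (H^2)^n * H * n ! ≤ (H^2)^n * H * (2*n+1)! := by
        apply mul_le_mul_of_nonneg_left h2 (by positivity)
    _ = H * (H^2)^n * (2*n+1)! := by ring

noncomputable def Cfun (H : ℝ) : ℂ → ℂ := (FormalMultilinearSeries.ofScalars ℂ (cosCoeff H)).sum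
noncomputable def Sfun (H : ℝ) : ℂ → ℂ :=
  fun z => z * (FormalMultilinearSeries.ofScalars ℂ (sinCoeff H)).sum z

lemma cos_radius (H : ℝ) : (FormalMultilinearSeries.ofScalars ℂ (cosCoeff H)).radius = ⊤ :=
  radius_top_of_le _ (H ^ 2) (norm_cosCoeff H)

lemma sin_radius (H : ℝ) (hH : 0 < H) :
    (FormalMultilinearSeries.ofScalars ℂ (sinCoeff H)).radius = ⊤ := by
  apply FormalMultilinearSeries.radius_eq_top_of_summable_norm
  intro r
  refine Summable.of_nonneg_of_le (fun n => by positivity) (fun n => ?_)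
    ((Real.summable_pow_div_factorial (H ^ 2 * r)).mul_left H)
  rw [FormalMultilinearSeries.ofScalars_norm]
  calc ‖sinCoeff H n‖ * (r:ℝ) ^ n ≤ (H * (H ^ 2) ^ n / n !) * r ^ n := by
        exact mul_le_mul_of_nonneg_right (norm_sinCoeff H hH n) (by positivity)
    _ = H * ((H ^ 2 * r) ^ n / n !) := by rw [mul_pow]; ring

lemma Cfun_analytic (H : ℝ) (z : ℂ) : AnalyticAt ℂ (Cfun H) z := by
  have h := (FormalMultilinearSeries.ofScalars ℂ (cosCoeff H)).hasFPowerSeriesOnBall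
    (by rw [cos_radius]; exact ENNReal.zero_lt_top)
  exact h.analyticAt_of_mem (by rw [cos_radius]; simp [edist_lt_top])

lemma Sfun_analytic (H : ℝ) (hH : 0 < H) (z : ℂ) : AnalyticAt ℂ (Sfun H) z := by
  have h := (FormalMultilinearSeries.ofScalars ℂ (sinCoeff H)).hasFPowerSeriesOnBall
    (by rw [sin_radius H hH]; exact ENNReal.zero_lt_top)
  exact analyticAt_id.mul (h.analyticAt_of_mem (by rw [sin_radius H hH]; simp [edist_lt_top]))

lemma Cfun_sq (H : ℝ) (β : ℂ) : Cfun H (β ^ 2) = Complex.cos (β * H) := by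
  have hsum : HasSum (fun n : ℕ => cosCoeff H n • (β ^ 2) ^ n) (Complex.cos (β * H)) := by
    convert Complex.hasSum_cos (β * H) using 2 with n
    rw [cosCoeff, smul_eq_mul, ← pow_mul, mul_pow]
    ring
  have h2 : HasSum (fun n : ℕ =>
      (FormalMultilinearSeries.ofScalars ℂ (cosCoeff H)) n (fun _ => β ^ 2))
      (Complex.cos (β * H)) := by
    convert hsum using 2 with n
    exact FormalMultilinearSeries.ofScalars_apply_eq _ _ _
  exact h2.tsum_eq

lemma Sfun_sq (H : ℝ) (β : ℂ) : Sfun H (β ^ 2) = β * Complex.sin (β * H) := by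
  have hsum : HasSum (fun n : ℕ => β ^ 2 * (sinCoeff H n • (β ^ 2) ^ n))
      (β * Complex.sin (β * H)) := by
    convert (Complex.hasSum_sin (β * H)).mul_left β using 2 with n
    swap
    rw [sinCoeff, smul_eq_mul, ← pow_mul, mul_pow, pow_succ]
    ring
    rfl
  have h2 : HasSum (fun n : ℕ =>
      β ^ 2 * ((FormalMultilinearSeries.ofScalars ℂ (sinCoeff H)) n (fun _ => β ^ 2)))
      (β * Complex.sin (β * H)) := by
    convert hsum using 2 with n
    rw [FormalMultilinearSeries.ofScalars_apply_eq]
  have := h2.tsum_eq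
  rw [tsum_mul_left] at this
  exact this


noncomputable def alphaC (c k ω : ℝ) : ℂ :=
  ((ω ^ 2 / c ^ 2 - k ^ 2 : ℝ) : ℂ) ^ (1 / 2 : ℂ)

noncomputable def Ndisp (H₁ H₂ ρ₁ ρ₂ c₁ c₂ : ℝ) (k ω : ℝ) : ℂ :=
  alphaC c₂ k ω * ((ρ₁ : ℂ) / (ρ₂ : ℂ)) * Complex.cos (alphaC c₁ k ω * H₁) *
      Complex.sin (alphaC c₂ k ω * H₂) +
    alphaC c₁ k ω * Complex.sin (alphaC c₁ k ω * H₁) *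
      Complex.cos (alphaC c₂ k ω * H₂)

lemma alphaC_sq (c k ω : ℝ) : (alphaC c k ω) ^ 2 = ((ω ^ 2 / c ^ 2 - k ^ 2 : ℝ) : ℂ) := by
  rw [alphaC]
  set z : ℂ := ((ω ^ 2 / c ^ 2 - k ^ 2 : ℝ) : ℂ) with hz
  by_cases h : z = 0
  · rw [h, Complex.zero_cpow (by norm_num : (1/2 : ℂ) ≠ 0)]
    norm_num
  · rw [sq, ← Complex.cpow_add _ _ h]
    norm_num

noncomputable def Fp (H₁ H₂ ρ₁ ρ₂ c₁ c₂ ω : ℝ) : ℂ → ℂ := fun z =>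
  ((ρ₁ : ℂ) / (ρ₂ : ℂ)) * Cfun H₁ (((ω ^ 2 / c₁ ^ 2 : ℝ) : ℂ) - z)
      * Sfun H₂ (((ω ^ 2 / c₂ ^ 2 : ℝ) : ℂ) - z)
    + Sfun H₁ (((ω ^ 2 / c₁ ^ 2 : ℝ) : ℂ) - z) * Cfun H₂ (((ω ^ 2 / c₂ ^ 2 : ℝ) : ℂ) - z)

lemma Ndisp_eq_Fp (H₁ H₂ ρ₁ ρ₂ c₁ c₂ k ω : ℝ) :
    Ndisp H₁ H₂ ρ₁ ρ₂ c₁ c₂ k ω = Fp H₁ H₂ ρ₁ ρ₂ c₁ c₂ ω ((k : ℂ) ^ 2) := by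
  have e₁ : ((ω ^ 2 / c₁ ^ 2 : ℝ) : ℂ) - (k : ℂ) ^ 2 = (alphaC c₁ k ω) ^ 2 := by
    rw [alphaC_sq]; push_cast; ring
  have e₂ : ((ω ^ 2 / c₂ ^ 2 : ℝ) : ℂ) - (k : ℂ) ^ 2 = (alphaC c₂ k ω) ^ 2 := by
    rw [alphaC_sq]; push_cast; ring
  rw [Fp, Ndisp]
  simp only [e₁, e₂, Cfun_sq, Sfun_sq]
  ring

lemma Fp_analytic (H₁ H₂ ρ₁ ρ₂ c₁ c₂ ω : ℝ) (hH₁ : 0 < H₁) (hH₂ : 0 < H₂) (z : ℂ) :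
    AnalyticAt ℂ (Fp H₁ H₂ ρ₁ ρ₂ c₁ c₂ ω) z := by
  have l₁ : AnalyticAt ℂ (fun z : ℂ => ((ω ^ 2 / c₁ ^ 2 : ℝ) : ℂ) - z) z :=
    analyticAt_const.sub analyticAt_id
  have l₂ : AnalyticAt ℂ (fun z : ℂ => ((ω ^ 2 / c₂ ^ 2 : ℝ) : ℂ) - z) z :=
    analyticAt_const.sub analyticAt_id
  exact ((analyticAt_const.mul ((Cfun_analytic H₁ _).comp l₁)).mul
      ((Sfun_analytic H₂ hH₂ _).comp l₂)).add
    (((Sfun_analytic H₁ hH₁ _).comp l₁).mul ((Cfun_analytic H₂ _).comp l₂))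

lemma Fp_neg (H₁ H₂ ρ₁ ρ₂ c₁ c₂ ω : ℝ)
    (hH₁ : 0 < H₁) (hH₂ : 0 < H₂) (hρ₁ : 0 < ρ₁) (hρ₂ : 0 < ρ₂)
    (hc₁ : 0 < c₁) (hc₂ : 0 < c₂) (hω : 0 < ω) (k : ℝ)
    (h₁ : ω / c₁ < k) (h₂ : ω / c₂ < k) :
    Fp H₁ H₂ ρ₁ ρ₂ c₁ c₂ ω ((k : ℂ) ^ 2) ≠ 0 := by
  have ha₁ : ω ^ 2 / c₁ ^ 2 < k ^ 2 := by
    rw [← div_pow]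
    exact pow_lt_pow_left₀ h₁ (by positivity) two_ne_zero
  have ha₂ : ω ^ 2 / c₂ ^ 2 < k ^ 2 := by
    rw [← div_pow]
    exact pow_lt_pow_left₀ h₂ (by positivity) two_ne_zero
  set t₁ := Real.sqrt (k ^ 2 - ω ^ 2 / c₁ ^ 2) with ht₁
  set t₂ := Real.sqrt (k ^ 2 - ω ^ 2 / c₂ ^ 2) with ht₂
  have ht₁0 : 0 < t₁ := Real.sqrt_pos.mpr (by linarith)
  have ht₂0 : 0 < t₂ := Real.sqrt_pos.mpr (by linarith)
  have hsq₁ : t₁ ^ 2 = k ^ 2 - ω ^ 2 / c₁ ^ 2 := Real.sq_sqrt (by linarith)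
  have hsq₂ : t₂ ^ 2 = k ^ 2 - ω ^ 2 / c₂ ^ 2 := Real.sq_sqrt (by linarith)
  have e₁ : ((ω ^ 2 / c₁ ^ 2 : ℝ) : ℂ) - (k : ℂ) ^ 2 = ((t₁ : ℂ) * Complex.I) ^ 2 := by
    rw [mul_pow, Complex.I_sq]
    rw [show ((t₁ : ℂ)) ^ 2 = ((t₁ ^ 2 : ℝ) : ℂ) by push_cast; ring, hsq₁]
    push_cast; ring
  have e₂ : ((ω ^ 2 / c₂ ^ 2 : ℝ) : ℂ) - (k : ℂ) ^ 2 = ((t₂ : ℂ) * Complex.I) ^ 2 := by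
    rw [mul_pow, Complex.I_sq]
    rw [show ((t₂ : ℂ)) ^ 2 = ((t₂ ^ 2 : ℝ) : ℂ) by push_cast; ring, hsq₂]
    push_cast; ring
  have arg₁ : (t₁ : ℂ) * Complex.I * (H₁ : ℂ) = ((t₁ * H₁ : ℝ) : ℂ) * Complex.I := by
    push_cast; ring
  have arg₂ : (t₂ : ℂ) * Complex.I * (H₂ : ℂ) = ((t₂ * H₂ : ℝ) : ℂ) * Complex.I := by
    push_cast; ring
  have hC₁ : Cfun H₁ (((ω ^ 2 / c₁ ^ 2 : ℝ) : ℂ) - (k : ℂ) ^ 2)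
      = ((Real.cosh (t₁ * H₁) : ℝ) : ℂ) := by
    rw [e₁, Cfun_sq, arg₁, Complex.cos_mul_I, Complex.ofReal_cosh]
  have hC₂ : Cfun H₂ (((ω ^ 2 / c₂ ^ 2 : ℝ) : ℂ) - (k : ℂ) ^ 2)
      = ((Real.cosh (t₂ * H₂) : ℝ) : ℂ) := by
    rw [e₂, Cfun_sq, arg₂, Complex.cos_mul_I, Complex.ofReal_cosh]
  have hS₁ : Sfun H₁ (((ω ^ 2 / c₁ ^ 2 : ℝ) : ℂ) - (k : ℂ) ^ 2)
      = -(((t₁ * Real.sinh (t₁ * H₁) : ℝ)) : ℂ) := by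
    rw [e₁, Sfun_sq, arg₁, Complex.sin_mul_I]
    push_cast
    linear_combination ((t₁:ℂ) * Complex.sinh ((t₁:ℂ) * (H₁:ℂ))) * Complex.I_sq
  have hS₂ : Sfun H₂ (((ω ^ 2 / c₂ ^ 2 : ℝ) : ℂ) - (k : ℂ) ^ 2)
      = -(((t₂ * Real.sinh (t₂ * H₂) : ℝ)) : ℂ) := by
    rw [e₂, Sfun_sq, arg₂, Complex.sin_mul_I]
    push_cast
    linear_combination ((t₂:ℂ) * Complex.sinh ((t₂:ℂ) * (H₂:ℂ))) * Complex.I_sq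
  have hval : Fp H₁ H₂ ρ₁ ρ₂ c₁ c₂ ω ((k : ℂ) ^ 2)
      = -(((ρ₁ / ρ₂ * Real.cosh (t₁ * H₁) * (t₂ * Real.sinh (t₂ * H₂))
          + t₁ * Real.sinh (t₁ * H₁) * Real.cosh (t₂ * H₂) : ℝ)) : ℂ) := by
    rw [Fp, hC₁, hC₂, hS₁, hS₂]
    push_cast
    ring
  rw [hval]
  rw [neg_ne_zero, Complex.ofReal_ne_zero]
  have p1 : 0 < ρ₁ / ρ₂ * Real.cosh (t₁ * H₁) * (t₂ * Real.sinh (t₂ * H₂)) := by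
    have := Real.cosh_pos (x := t₁ * H₁)
    have := Real.sinh_pos_iff.mpr (by positivity : 0 < t₂ * H₂)
    positivity
  have p2 : 0 < t₁ * Real.sinh (t₁ * H₁) * Real.cosh (t₂ * H₂) := by
    have := Real.cosh_pos (x := t₂ * H₂)
    have := Real.sinh_pos_iff.mpr (by positivity : 0 < t₁ * H₁)
    positivity
  positivity

/-- For fixed `ω > 0`, the set of nonnegative real roots `k` of the dispersion
equation `N(k,ω) = 0` is finite. -/
theorem Ndisp_roots_finite (H₁ H₂ ρ₁ ρ₂ c₁ c₂ ω : ℝ)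
    (hH₁ : 0 < H₁) (hH₂ : 0 < H₂) (hρ₁ : 0 < ρ₁) (hρ₂ : 0 < ρ₂)
    (hc₁ : 0 < c₁) (hc₂ : 0 < c₂) (hω : 0 < ω) :
    {k : ℝ | 0 ≤ k ∧ Ndisp H₁ H₂ ρ₁ ρ₂ c₁ c₂ k ω = 0}.Finite := by
  by_contra hfin
  have hinf : {k : ℝ | 0 ≤ k ∧ Ndisp H₁ H₂ ρ₁ ρ₂ c₁ c₂ k ω = 0}.Infinite := hfin
  set S := {k : ℝ | 0 ≤ k ∧ Ndisp H₁ H₂ ρ₁ ρ₂ c₁ c₂ k ω = 0} with hS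
  set K := max (ω / c₁) (ω / c₂) with hK
  have hsub : S ⊆ Set.Icc 0 K := by
    rintro k ⟨hk0, hk⟩
    refine ⟨hk0, ?_⟩
    by_contra hKk
    push_neg at hKk
    have h1 : ω / c₁ < k := lt_of_le_of_lt (le_max_left _ _) hKk
    have h2 : ω / c₂ < k := lt_of_le_of_lt (le_max_right _ _) hKk
    exact Fp_neg H₁ H₂ ρ₁ ρ₂ c₁ c₂ ω hH₁ hH₂ hρ₁ hρ₂ hc₁ hc₂ hω k h1 h2
      (by rw [← Ndisp_eq_Fp]; exact hk)
  obtain ⟨x₀, _, hacc⟩ := hinf.exists_accPt_of_subset_isCompact isCompact_Icc hsub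
  have hfreq : ∃ᶠ z in nhdsWithin x₀ {x₀}ᶜ,
      (fun k : ℝ => Fp H₁ H₂ ρ₁ ρ₂ c₁ c₂ ω ((k : ℂ) ^ 2)) z = 0 := by
    rw [accPt_iff_frequently] at hacc
    rw [frequently_nhdsWithin_iff]
    refine hacc.mono (fun y hy => ⟨?_, hy.1⟩)
    show Fp H₁ H₂ ρ₁ ρ₂ c₁ c₂ ω ((y : ℂ) ^ 2) = 0
    rw [← Ndisp_eq_Fp]
    exact hy.2.2
  have hfz : AnalyticOnNhd ℝ (fun k : ℝ => Fp H₁ H₂ ρ₁ ρ₂ c₁ c₂ ω ((k : ℂ) ^ 2))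
      Set.univ := by
    intro x _
    have hg : AnalyticAt ℝ (fun k : ℝ => ((k : ℂ) ^ 2)) x :=
      (Complex.ofRealCLM.analyticAt x).pow 2
    exact ((Fp_analytic H₁ H₂ ρ₁ ρ₂ c₁ c₂ ω hH₁ hH₂ _).restrictScalars).comp hg
  have heq := hfz.eqOn_zero_of_preconnected_of_frequently_eq_zero isPreconnected_univ
    (Set.mem_univ x₀) hfreq
  have hzero : Fp H₁ H₂ ρ₁ ρ₂ c₁ c₂ ω (((K + 1 : ℝ) : ℂ) ^ 2) = 0 :=
    heq (Set.mem_univ (K + 1))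
  exact Fp_neg H₁ H₂ ρ₁ ρ₂ c₁ c₂ ω hH₁ hH₂ hρ₁ hρ₂ hc₁ hc₂ hω (K + 1)
    (lt_of_le_of_lt (le_max_left _ _) (lt_add_one K))
    (lt_of_le_of_lt (le_max_right _ _) (lt_add_one K)) hzero
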